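/- Let G : ℝ → ℝ satisfy G(x) > 0 and F(G(x)) = x for all x ∈ (0, 1/e). Then G(x) ~ 1/√(2 log(1/x)) as x → 0⁺; that is, G(x) · √(2 log(1/x)) tends to 1 as x → 0⁺. -/

import Mathlib

open Real Set Filter

/-- Standard normal density. -/
noncomputable def stdNormalPDF (x : ℝ) : ℝ :=
  Real.exp (-x ^ 2 / 2) / Real.sqrt (2 * Real.pi)

/-- `F x = ∫_0^x φ(1/v + v/2) dv`. -/
noncomputable def F (x : ℝ) : ℝ :=
  ∫ v in (0 : ℝ)..x, stdNormalPDF (1 / v + v / 2)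

open MeasureTheory

noncomputable def fF (v : ℝ) : ℝ := stdNormalPDF (1 / v + v / 2)

lemma fF_nonneg (v : ℝ) : 0 ≤ fF v := by
  unfold fF stdNormalPDF
  positivity

lemma sqrt_two_pi_ge_one : (1 : ℝ) ≤ Real.sqrt (2 * Real.pi) := by
  rw [show (1:ℝ) = Real.sqrt 1 from Real.sqrt_one.symm]
  apply Real.sqrt_le_sqrt
  nlinarith [Real.pi_gt_three]

lemma fF_le_one (v : ℝ) : fF v ≤ 1 := by
  unfold fF stdNormalPDF
  have h1 : Real.exp (-(1 / v + v / 2) ^ 2 / 2) ≤ 1 := by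
    rw [Real.exp_le_one_iff]
    apply div_nonpos_of_nonpos_of_nonneg (neg_nonpos.2 (sq_nonneg _)) (by norm_num)
  rw [div_le_one (lt_of_lt_of_le one_pos sqrt_two_pi_ge_one)]
  exact h1.trans sqrt_two_pi_ge_one

lemma fF_meas : Measurable fF := by
  have h1 : Measurable fun v : ℝ => 1 / v + v / 2 := by
    fun_prop
  have h2 : Continuous stdNormalPDF := by
    unfold stdNormalPDF
    fun_prop
  exact h2.measurable.comp h1

lemma fF_intOn {s : Set ℝ} (hs : MeasureTheory.volume s < ⊤) :
    MeasureTheory.IntegrableOn fF s := by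
  apply MeasureTheory.Integrable.mono' (g := fun _ => (1:ℝ))
    (MeasureTheory.integrableOn_const hs.ne)
    fF_meas.aestronglyMeasurable
  filter_upwards with v
  rw [Real.norm_eq_abs, abs_of_nonneg (fF_nonneg v)]
  exact fF_le_one v

lemma fF_intble (a b : ℝ) : IntervalIntegrable fF MeasureTheory.volume a b := by
  rw [intervalIntegrable_iff]
  exact fF_intOn measure_Ioc_lt_top

lemma F_eq {t : ℝ} (ht : 0 ≤ t) : F t = ∫ v in Set.Ioc 0 t, fF v := by
  rw [F, intervalIntegral.integral_of_le ht]
  rfl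

lemma F_nonneg {t : ℝ} (ht : 0 ≤ t) : 0 ≤ F t := by
  rw [F_eq ht]
  exact MeasureTheory.setIntegral_nonneg measurableSet_Ioc fun v _ => fF_nonneg v

lemma F_mono {s t : ℝ} (hs : 0 ≤ s) (hst : s ≤ t) : F s ≤ F t := by
  rw [F_eq hs, F_eq (hs.trans hst)]
  apply MeasureTheory.setIntegral_mono_set (fF_intOn measure_Ioc_lt_top)
    (Filter.Eventually.of_forall fun v => fF_nonneg v)
  exact HasSubset.Subset.eventuallyLE (Set.Ioc_subset_Ioc le_rfl hst)

lemma F_ub {t : ℝ} (ht : 0 < t) : F t ≤ t * Real.exp (-(1 / (2 * t ^ 2))) := by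
  rw [F_eq ht.le]
  have key : ∀ v ∈ Set.Ioc (0:ℝ) t, fF v ≤ Real.exp (-(1 / (2 * t ^ 2))) := by
    intro v hv
    have hv0 : 0 < v := hv.1
    have hsq : 1 / t ^ 2 ≤ (1 / v + v / 2) ^ 2 := by
      have hexp : (1 / v + v / 2) ^ 2 = 1 / v ^ 2 + 1 + v ^ 2 / 4 := by
        field_simp
        ring
      have h1 : 1 / t ^ 2 ≤ 1 / v ^ 2 := by
        apply one_div_le_one_div_of_le (by positivity)
        exact pow_le_pow_left₀ hv0.le hv.2 2
      nlinarith [sq_nonneg v]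
    have h2 : Real.exp (-(1 / v + v / 2) ^ 2 / 2) ≤ Real.exp (-(1 / (2 * t ^ 2))) := by
      apply Real.exp_le_exp.2
      have hid : 1 / (2 * t ^ 2) = (1 / t ^ 2) / 2 := by ring
      rw [neg_div, neg_le_neg_iff, hid]
      linarith
    calc fF v = Real.exp (-(1 / v + v / 2) ^ 2 / 2) / Real.sqrt (2 * Real.pi) := rfl
      _ ≤ Real.exp (-(1 / v + v / 2) ^ 2 / 2) / 1 := by
          apply div_le_div_of_nonneg_left (by positivity) one_pos sqrt_two_pi_ge_one
      _ = Real.exp (-(1 / v + v / 2) ^ 2 / 2) := by ring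
      _ ≤ _ := h2
  calc (∫ v in Set.Ioc 0 t, fF v)
      ≤ ∫ _ in Set.Ioc (0:ℝ) t, Real.exp (-(1 / (2 * t ^ 2))) := by
        apply MeasureTheory.setIntegral_mono_on (fF_intOn measure_Ioc_lt_top)
          (MeasureTheory.integrableOn_const measure_Ioc_lt_top.ne)
          measurableSet_Ioc key
    _ = t * Real.exp (-(1 / (2 * t ^ 2))) := by
        simp [Real.volume_Ioc, ENNReal.toReal_ofReal ht.le, ht.le]

lemma F_lb {s t : ℝ} (hs : 0 < s) (hst : s < t) :
    (t - s) * (Real.exp (-(1 / s + t / 2) ^ 2 / 2) / Real.sqrt (2 * Real.pi)) ≤ F t := by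
  have ht : 0 < t := hs.trans hst
  rw [F_eq ht.le]
  have hsub : Set.Ioc s t ⊆ Set.Ioc 0 t := Set.Ioc_subset_Ioc hs.le le_rfl
  have step1 : (∫ v in Set.Ioc s t, fF v) ≤ ∫ v in Set.Ioc 0 t, fF v := by
    apply MeasureTheory.setIntegral_mono_set (fF_intOn measure_Ioc_lt_top)
      (Filter.Eventually.of_forall fun v => fF_nonneg v)
    exact HasSubset.Subset.eventuallyLE hsub
  refine le_trans ?_ step1
  have key : ∀ v ∈ Set.Ioc s t,
      Real.exp (-(1 / s + t / 2) ^ 2 / 2) / Real.sqrt (2 * Real.pi) ≤ fF v := by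
    intro v hv
    have hv0 : 0 < v := hs.trans hv.1
    have hle : 1 / v + v / 2 ≤ 1 / s + t / 2 := by
      have : 1 / v ≤ 1 / s := one_div_le_one_div_of_le hs hv.1.le
      linarith [hv.2]
    have hpos : 0 < 1 / v + v / 2 := by positivity
    have hsq : (1 / v + v / 2) ^ 2 ≤ (1 / s + t / 2) ^ 2 := by
      apply pow_le_pow_left₀ hpos.le hle
    show Real.exp (-(1 / s + t / 2) ^ 2 / 2) / Real.sqrt (2 * Real.pi)
        ≤ Real.exp (-(1 / v + v / 2) ^ 2 / 2) / Real.sqrt (2 * Real.pi)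
    gcongr
  calc (t - s) * (Real.exp (-(1 / s + t / 2) ^ 2 / 2) / Real.sqrt (2 * Real.pi))
      = ∫ _ in Set.Ioc s t, Real.exp (-(1 / s + t / 2) ^ 2 / 2) / Real.sqrt (2 * Real.pi) := by
        simp [Real.volume_Ioc, ENNReal.toReal_ofReal (by linarith : (0:ℝ) ≤ t - s), hst.le]
    _ ≤ ∫ v in Set.Ioc s t, fF v := by
        apply MeasureTheory.setIntegral_mono_on
          (MeasureTheory.integrableOn_const measure_Ioc_lt_top.ne)
          (fF_intOn measure_Ioc_lt_top) measurableSet_Ioc key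

noncomputable def Psi (u : ℝ) : ℝ :=
  1 / (1 - u) ^ 2 + u ^ 2 / (1 - u) + u ^ 4 / 4 + u ^ 2 * Real.log (2 * Real.pi)
    + 4 * (u * -(u * Real.log u))

lemma Psi_tendsto : Filter.Tendsto Psi (nhds 0) (nhds 1) := by
  have hc : ContinuousAt Psi 0 := by
    unfold Psi
    apply ContinuousAt.add
    apply ContinuousAt.add
    apply ContinuousAt.add
    apply ContinuousAt.add
    · exact ContinuousAt.div continuousAt_const (by fun_prop) (by norm_num)
    · exact ContinuousAt.div (by fun_prop) (by fun_prop) (by norm_num)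
    · fun_prop
    · fun_prop
    · exact (continuous_const.mul (continuous_id.mul Real.continuous_mul_log.neg)).continuousAt
  have h0 : Psi 0 = 1 := by simp [Psi]
  simpa [h0] using hc.tendsto

/-- `G(x) ~ 1/√(2 log(1/x))` as `x → 0⁺`, where `G` inverts `F`. -/
theorem F_inv_equiv (G : ℝ → ℝ)
    (hGpos : ∀ x ∈ Set.Ioo 0 (1 / Real.exp 1), 0 < G x)
    (hG : ∀ x ∈ Set.Ioo 0 (1 / Real.exp 1), F (G x) = x) :
    Filter.Tendsto (fun x : ℝ => G x * Real.sqrt (2 * Real.log (1 / x)))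
      (nhdsWithin 0 (Set.Ioi 0)) (nhds 1) := by
  have hx_mem : ∀ᶠ x in nhdsWithin (0:ℝ) (Set.Ioi 0), x ∈ Set.Ioo (0:ℝ) (1 / Real.exp 1) := by
    have hmem : Set.Ioo (0:ℝ) (1 / Real.exp 1) ∈ nhdsWithin (0:ℝ) (Set.Ioi 0) :=
      Ioo_mem_nhdsGT_of_mem ⟨le_rfl, by positivity⟩
    exact Filter.eventually_iff.2 hmem
  -- G x < c eventually, for every c > 0
  have hGlt : ∀ c : ℝ, 0 < c → ∀ᶠ x in nhdsWithin (0:ℝ) (Set.Ioi 0), G x < c := by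
    intro c hc
    have hFc : 0 < F c := by
      have h := F_lb (s := c / 2) (t := c) (half_pos hc) (half_lt_self hc)
      have hpos : 0 < (c - c / 2) *
          (Real.exp (-(1 / (c / 2) + c / 2) ^ 2 / 2) / Real.sqrt (2 * Real.pi)) := by
        apply mul_pos (by linarith)
        exact div_pos (Real.exp_pos _) (lt_of_lt_of_le one_pos sqrt_two_pi_ge_one)
      linarith
    have hxev : ∀ᶠ x in nhdsWithin (0:ℝ) (Set.Ioi 0), x ∈ Set.Ioo (0:ℝ) (F c) :=
      Filter.eventually_iff.2 (Ioo_mem_nhdsGT_of_mem ⟨le_rfl, hFc⟩)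
    filter_upwards [hx_mem, hxev] with x hx hxFc
    by_contra hcontra
    push_neg at hcontra
    have : F c ≤ F (G x) := F_mono hc.le hcontra
    rw [hG x hx] at this
    exact absurd hxFc.2 (not_lt.2 this)
  have hG0 : Filter.Tendsto G (nhdsWithin (0:ℝ) (Set.Ioi 0)) (nhds 0) := by
    rw [tendsto_order]
    constructor
    · intro c hc
      filter_upwards [hx_mem] with x hx
      exact lt_of_lt_of_le hc (hGpos x hx).le
    · intro c hc
      exact hGlt c hc
  -- lower bound
  have hlow : ∀ᶠ x in nhdsWithin (0:ℝ) (Set.Ioi 0),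
      1 ≤ 2 * Real.log (1 / x) * (G x) ^ 2 := by
    filter_upwards [hx_mem, hGlt 1 one_pos] with x hx hu1
    set u := G x with hu
    have hu0 : 0 < u := hGpos x hx
    have hub := F_ub hu0
    rw [hG x hx] at hub
    have h1 : x ≤ Real.exp (-(1 / (2 * u ^ 2))) := by
      have hep : 0 < Real.exp (-(1 / (2 * u ^ 2))) := Real.exp_pos _
      nlinarith
    have h2 : Real.log x ≤ -(1 / (2 * u ^ 2)) := by
      have := Real.log_le_log hx.1 h1
      rwa [Real.log_exp] at this
    have h3 : Real.log (1 / x) = -Real.log x := by rw [one_div, Real.log_inv]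
    rw [h3]
    have h4 : 1 / (2 * u ^ 2) ≤ -Real.log x := by linarith
    have h5 : 2 * (1 / (2 * u ^ 2)) * u ^ 2 = 1 := by field_simp
    nlinarith [sq_nonneg u]
  -- upper bound
  have hup : ∀ᶠ x in nhdsWithin (0:ℝ) (Set.Ioi 0),
      2 * Real.log (1 / x) * (G x) ^ 2 ≤ Psi (G x) := by
    filter_upwards [hx_mem, hGlt 1 one_pos] with x hx hu1
    set u := G x with hu
    have hu0 : 0 < u := hGpos x hx
    have h1u : 0 < 1 - u := by linarith
    have hs : 0 < u * (1 - u) := mul_pos hu0 h1u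
    have hst : u * (1 - u) < u := by nlinarith
    have hlb := F_lb hs hst
    rw [hG x hx] at hlb
    set A : ℝ := 1 / (u * (1 - u)) + u / 2 with hA
    have hts : u - u * (1 - u) = u ^ 2 := by ring
    rw [hts] at hlb
    have hBpos : 0 < u ^ 2 * (Real.exp (-A ^ 2 / 2) / Real.sqrt (2 * Real.pi)) := by
      apply mul_pos (by positivity)
      exact div_pos (Real.exp_pos _) (lt_of_lt_of_le one_pos sqrt_two_pi_ge_one)
    have hlog : Real.log (u ^ 2 * (Real.exp (-A ^ 2 / 2) / Real.sqrt (2 * Real.pi)))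
        ≤ Real.log x := Real.log_le_log hBpos hlb
    have hsqne : Real.sqrt (2 * Real.pi) ≠ 0 := by
      have := sqrt_two_pi_ge_one; linarith
    rw [Real.log_mul (by positivity) (by positivity),
        Real.log_div (Real.exp_ne_zero _) hsqne, Real.log_exp, Real.log_pow,
        Real.log_sqrt (by positivity)] at hlog
    -- hlog : 2 * log u + (-A^2/2 - log(2π)/2) ≤ log x
    have hmul : (-Real.log x) * (2 * u ^ 2)
        ≤ (A ^ 2 / 2 + Real.log (2 * Real.pi) / 2 - 2 * Real.log u) * (2 * u ^ 2) := by
      apply mul_le_mul_of_nonneg_right _ (by positivity)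
      push_cast at hlog
      linarith
    have expand : u ^ 2 * A ^ 2 = 1 / (1 - u) ^ 2 + u ^ 2 / (1 - u) + u ^ 4 / 4 := by
      rw [hA]
      field_simp
      ring
    have h3 : Real.log (1 / x) = -Real.log x := by rw [one_div, Real.log_inv]
    rw [h3]
    calc 2 * -Real.log x * u ^ 2 = (-Real.log x) * (2 * u ^ 2) := by ring
      _ ≤ (A ^ 2 / 2 + Real.log (2 * Real.pi) / 2 - 2 * Real.log u) * (2 * u ^ 2) := hmul
      _ = u ^ 2 * A ^ 2 + u ^ 2 * Real.log (2 * Real.pi) + 4 * (u * -(u * Real.log u)) := by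
          ring
      _ = Psi u := by rw [expand, Psi]
  have hmain : Filter.Tendsto (fun x => 2 * Real.log (1 / x) * (G x) ^ 2)
      (nhdsWithin (0:ℝ) (Set.Ioi 0)) (nhds 1) := by
    have hPsi : Filter.Tendsto (fun x => Psi (G x)) (nhdsWithin (0:ℝ) (Set.Ioi 0)) (nhds 1) :=
      Psi_tendsto.comp hG0
    exact tendsto_of_tendsto_of_tendsto_of_le_of_le' tendsto_const_nhds hPsi hlow hup
  have hsqrt : Filter.Tendsto (fun x => Real.sqrt (2 * Real.log (1 / x) * (G x) ^ 2))
      (nhdsWithin (0:ℝ) (Set.Ioi 0)) (nhds 1) := by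
    have := (Real.continuous_sqrt.tendsto 1).comp hmain
    simpa [Function.comp_def] using this
  apply hsqrt.congr'
  filter_upwards [hx_mem] with x hx
  have hu0 : 0 ≤ G x := (hGpos x hx).le
  have hx1 : x ≤ 1 := by
    have h2 : (1:ℝ) ≤ Real.exp 1 := by
      have := Real.add_one_le_exp (1:ℝ); linarith
    have : 1 / Real.exp 1 ≤ 1 := by
      rw [div_le_one (by positivity)]; exact h2
    linarith [hx.2]
  have hL : 0 ≤ 2 * Real.log (1 / x) := by
    have : 0 ≤ Real.log (1 / x) := Real.log_nonneg (one_le_one_div hx.1 hx1)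
    linarith
  rw [Real.sqrt_mul hL, Real.sqrt_sq hu0, mul_comm]
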